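/- For every integer m ≥ 1 and every nonzero complex number z, the function K_m(z) = ∫_0^π e^{z cos w} sin(m w) dw satisfies the recurrence K_{m+1}(z) = -(2m/z) K_m(z) + K_{m-1}(z) + (2/z)(e^z + (-1)^{m-1} e^{-z}). -/

import Mathlib

open MeasureTheory Complex

/-- `K m z = ∫_0^π e^{z cos w} sin(m w) dw`. -/
noncomputable def K (m : ℕ) (z : ℂ) : ℂ :=
  ∫ w in (0:ℝ)..Real.pi, Complex.exp (z * Real.cos w) * Real.sin (m * w)

lemma K_cont (z : ℂ) (c : ℝ) :
    Continuous fun w : ℝ => Complex.exp (z * Real.cos w) * (Real.sin (c * w) : ℂ) := by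
  fun_prop

lemma hasDerivAt_expcos (z : ℂ) (w : ℝ) :
    HasDerivAt (fun w : ℝ => Complex.exp (z * Real.cos w))
      (-z * Real.sin w * Complex.exp (z * Real.cos w)) w := by
  have h1 : HasDerivAt (fun y : ℂ => Complex.exp (z * Complex.cos y))
      (Complex.exp (z * Complex.cos w) * (z * -Complex.sin w)) (w : ℂ) :=
    ((Complex.hasDerivAt_cos (w : ℂ)).const_mul z).cexp
  have h2 := h1.comp_ofReal
  simp only [← Complex.ofReal_cos, ← Complex.ofReal_sin] at h2
  convert h2 using 1
  ring

lemma hasDerivAt_cosc (c : ℝ) (w : ℝ) :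
    HasDerivAt (fun w : ℝ => (Real.cos (c * w) : ℂ))
      ((-(c * Real.sin (c * w)) : ℝ) : ℂ) w := by
  have h1 : HasDerivAt (fun w : ℝ => Real.cos (c * w)) (-(c * Real.sin (c * w))) w := by
    have := (Real.hasDerivAt_cos (c * w)).comp w ((hasDerivAt_id w).const_mul c)
    exact this.congr_deriv (by ring)
  exact h1.ofReal_comp

/-- Recurrence relation for `K m z`. -/
theorem K_recurrence (m : ℕ) (hm : 1 ≤ m) (z : ℂ) (hz : z ≠ 0) :
    K (m + 1) z = -(2 * m / z) * K m z + K (m - 1) z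
      + (2 / z) * (Complex.exp z + (-1:ℂ)^(m-1) * Complex.exp (-z)) := by
  obtain ⟨n, rfl⟩ : ∃ n, m = n + 1 := ⟨m - 1, (Nat.succ_pred_eq_of_pos hm).symm⟩
  have pi_pos := Real.pi_pos
  -- Step 1: difference of K's as a single integral
  have hint : ∀ c : ℝ, IntervalIntegrable
      (fun w : ℝ => Complex.exp (z * Real.cos w) * (Real.sin (c * w) : ℂ))
      volume 0 Real.pi := fun c => (K_cont z c).intervalIntegrable _ _
  have key : K (n + 2) z - K n z
      = ∫ w in (0:ℝ)..Real.pi,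
          Complex.exp (z * Real.cos w) * (2 * Real.cos ((n + 1) * w) * Real.sin w : ℝ) := by
    rw [K, K, ← intervalIntegral.integral_sub (hint _) (hint _)]
    apply intervalIntegral.integral_congr
    intro w _
    dsimp only
    rw [← mul_sub]
    congr 1
    rw [← Complex.ofReal_sub, Complex.ofReal_inj]
    have h1 : ((n + 2 : ℕ) : ℝ) * w = ((n : ℝ) + 1) * w + w := by push_cast; ring
    have h2 : ((n : ℕ) : ℝ) * w = ((n : ℝ) + 1) * w - w := by ring
    rw [h1, h2, Real.sin_add, Real.sin_sub]
    ring
  -- Step 2: integration by parts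
  have ibp := intervalIntegral.integral_mul_deriv_eq_deriv_mul
      (u := fun w : ℝ => (Real.cos ((n + 1 : ℝ) * w) : ℂ))
      (v := fun w : ℝ => Complex.exp (z * Real.cos w))
      (u' := fun w : ℝ => ((-((n + 1 : ℝ) * Real.sin ((n + 1 : ℝ) * w)) : ℝ) : ℂ))
      (v' := fun w : ℝ => -z * Real.sin w * Complex.exp (z * Real.cos w))
      (a := 0) (b := Real.pi)
      (fun x _ => hasDerivAt_cosc _ x) (fun x _ => hasDerivAt_expcos z x)
      (by apply Continuous.intervalIntegrable; fun_prop)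
      (by apply Continuous.intervalIntegrable; fun_prop)
  -- rewrite both sides of ibp
  have hL : (∫ w in (0:ℝ)..Real.pi,
      (Real.cos ((n + 1 : ℝ) * w) : ℂ) * (-z * Real.sin w * Complex.exp (z * Real.cos w)))
      = (-z / 2) * (K (n + 2) z - K n z) := by
    rw [key, ← intervalIntegral.integral_const_mul]
    apply intervalIntegral.integral_congr
    intro w _
    push_cast
    ring
  have hR : (∫ w in (0:ℝ)..Real.pi,
      ((-((n + 1 : ℝ) * Real.sin ((n + 1 : ℝ) * w)) : ℝ) : ℂ) * Complex.exp (z * Real.cos w))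
      = -((n : ℂ) + 1) * K (n + 1) z := by
    rw [K, ← intervalIntegral.integral_const_mul]
    apply intervalIntegral.integral_congr
    intro w _
    push_cast
    ring
  rw [hL, hR] at ibp
  have hcos : (Real.cos ((n + 1 : ℝ) * Real.pi) : ℂ) = (-1 : ℂ) ^ (n + 1) := by
    rw [show ((n + 1 : ℝ) * Real.pi) = (n + 1 : ℕ) * Real.pi - 0 by push_cast; ring,
      Real.cos_nat_mul_pi_sub, Real.cos_zero]
    push_cast
    ring
  simp only [Real.cos_pi, Real.cos_zero, mul_zero, Complex.ofReal_neg, Complex.ofReal_one,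
    mul_neg, mul_one, Complex.ofReal_zero] at ibp
  rw [hcos] at ibp
  -- ibp : (-z/2) * (K (n+2) z - K n z) = (-1)^(n+1) * exp (-z) - 1 * exp z - (-(n+1)) * K (n+1) z
  have hK : K (n + 2) z - K n z
      = (-2 / z) * ((-1 : ℂ) ^ (n + 1) * Complex.exp (-z) - Complex.exp z
          + ((n : ℂ) + 1) * K (n + 1) z) := by
    have h2 : (-z / 2) * (K (n + 2) z - K n z)
        = (-1 : ℂ) ^ (n + 1) * Complex.exp (-z) - Complex.exp z + ((n : ℂ) + 1) * K (n + 1) z := by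
      rw [ibp]; ring
    rw [pow_succ] at h2 ⊢
    field_simp at h2 ⊢
    linear_combination (-1) * h2
  have e1 : (n + 1 + 1 : ℕ) = n + 2 := rfl
  have e2 : (n + 1 - 1 : ℕ) = n := rfl
  rw [e1, e2]
  have := hK
  push_cast
  have hpow : ((-1 : ℂ)) ^ (n + 1) = -((-1 : ℂ)) ^ n := by ring
  rw [hpow] at this
  field_simp at this ⊢
  linear_combination this
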